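/- arXiv:0912.4748 — 4 statements merged into one kernel-verified Lean document; each statement's English description precedes it below -/
import Mathlib

section
/- Let X ⊆ Y be elements of (Z_p ∪ {0})^n, not all zero, with alt(X) = alt(Y). Then the first nonzero entry of X equals the first nonzero entry of Y. -/
/-- `altOf X` is the maximum length of a subsequence of the nonzero (i.e. `some`)
entries of `X` in which any two consecutive terms are distinct. -/
noncomputable def altOf {α : Type*} {n : ℕ} (X : Fin n → Option α) : ℕ :=
  sSup {m | ∃ l : List α, l.Chain' (· ≠ ·) ∧ l.Sublist ((List.ofFn X).filterMap id) ∧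
    l.length = m}

private lemma aux_sublist {α : Type*} {l1 l2 : List (Option α)}
    (h : List.Forall₂ (fun x y => x ≠ none → y = x) l1 l2) :
    (l1.filterMap id).Sublist (l2.filterMap id) := by
  induction h with
  | nil => simp
  | @cons x y t1 t2 hxy _ ih =>
    cases x with
    | none =>
      simp only [List.filterMap_cons, id]
      cases y with
      | none => exact ih
      | some b => exact ih.trans (List.sublist_cons_self _ _)
    | some a =>
      have hy : y = some a := hxy (by simp)
      subst hy
      simpa only [List.filterMap_cons, id] using ih.cons₂ a

private lemma aux_take_none {α : Type*} (l : List (Option α)) (m : ℕ)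
    (h : ∀ k, (hk : k < l.length) → k < m → l[k] = none) :
    l.filterMap id = (l.drop m).filterMap id := by
  conv_lhs => rw [← List.take_append_drop m l]
  rw [List.filterMap_append]
  have hnil : (l.take m).filterMap id = [] := by
    rw [List.filterMap_eq_nil_iff]
    intro x hx
    obtain ⟨k, hk, hkx⟩ := List.getElem_of_mem hx
    have hk1 : k < m := lt_of_lt_of_le hk (by simp [List.length_take])
    have hk2 : k < l.length := by
      have := hk; simp [List.length_take] at this; omega
    have : x = none := by
      rw [← hkx, List.getElem_take]
      exact h k hk2 hk1
    simp [this]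
  rw [hnil, List.nil_append]

/-- If `X ⊆ Y`, `X` is not all zero, and `alt(X) = alt(Y)`, then the first nonzero
entry of `X` equals the first nonzero entry of `Y`. -/
theorem stmt_4 (p n : ℕ) (hp : p.Prime) (X Y : Fin n → Option (Fin p))
    (hsub : ∀ i, X i ≠ none → Y i = X i)
    (hne : ∃ i, X i ≠ none)
    (halt : altOf X = altOf Y)
    (i i' : Fin n)
    (hi : X i ≠ none ∧ ∀ j, j < i → X j = none)
    (hi' : Y i' ≠ none ∧ ∀ j, j < i' → Y j = none) :
    X i = Y i' := by
  classical
  obtain ⟨hXi, hXfirst⟩ := hi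
  obtain ⟨hYi', hYfirst⟩ := hi'
  have hYiXi : Y i = X i := hsub i hXi
  have hii : i' ≤ i := by
    by_contra h
    push_neg at h
    exact hXi (hYiXi ▸ hYfirst i h)
  rcases eq_or_lt_of_le hii with heq | hlt
  · subst heq; exact hYiXi.symm
  -- now i' < i
  obtain ⟨a, ha⟩ := Option.ne_none_iff_exists'.mp hXi
  obtain ⟨b, hb⟩ := Option.ne_none_iff_exists'.mp hYi'
  rw [ha, hb]
  suffices hab : a = b by rw [hab]
  by_contra hab
  -- sets
  set SX : Set ℕ := {m | ∃ l : List (Fin p), l.Chain' (· ≠ ·) ∧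
    l.Sublist ((List.ofFn X).filterMap id) ∧ l.length = m} with hSX
  set SY : Set ℕ := {m | ∃ l : List (Fin p), l.Chain' (· ≠ ·) ∧
    l.Sublist ((List.ofFn Y).filterMap id) ∧ l.length = m} with hSY
  have haltX : altOf X = sSup SX := rfl
  have haltY : altOf Y = sSup SY := rfl
  have hbddX : BddAbove SX := by
    refine ⟨((List.ofFn X).filterMap id).length, ?_⟩
    rintro m ⟨l, -, hl, rfl⟩
    exact hl.length_le
  have hbddY : BddAbove SY := by
    refine ⟨((List.ofFn Y).filterMap id).length, ?_⟩
    rintro m ⟨l, -, hl, rfl⟩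
    exact hl.length_le
  have hneX : SX.Nonempty := ⟨0, [], List.isChain_nil, by simp⟩
  -- structural decompositions
  have hiX : (i : ℕ) < (List.ofFn X).length := by simp [i.2]
  have hiY : (i' : ℕ) < (List.ofFn Y).length := by simp [i'.2]
  have hlX : (List.ofFn X).filterMap id
      = a :: ((List.ofFn X).drop (i + 1)).filterMap id := by
    rw [aux_take_none (List.ofFn X) i (by
      intro k hk hki
      rw [List.getElem_ofFn]
      exact hXfirst ⟨k, by simpa using hk⟩ (by simpa [Fin.lt_def] using hki))]
    rw [List.drop_eq_getElem_cons hiX, List.filterMap_cons, List.getElem_ofFn]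
    simp only [Fin.eta, ha, id]
  have hlY : (List.ofFn Y).filterMap id
      = b :: ((List.ofFn Y).drop (i' + 1)).filterMap id := by
    rw [aux_take_none (List.ofFn Y) i' (by
      intro k hk hki
      rw [List.getElem_ofFn]
      exact hYfirst ⟨k, by simpa using hk⟩ (by simpa [Fin.lt_def] using hki))]
    rw [List.drop_eq_getElem_cons hiY, List.filterMap_cons, List.getElem_ofFn]
    simp only [Fin.eta, hb, id]
  -- lX also equals filterMap of drop (i'+1) of X
  have hlX2 : (List.ofFn X).filterMap id
      = ((List.ofFn X).drop (i' + 1)).filterMap id := by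
    apply aux_take_none
    intro k hk hki
    rw [List.getElem_ofFn]
    refine hXfirst ⟨k, by simpa using hk⟩ ?_
    have : (i' : ℕ) + 1 ≤ (i : ℕ) := hlt
    simp only [Fin.lt_def]
    omega
  have hdropXY : (((List.ofFn X).drop (i' + 1)).filterMap id).Sublist
      (((List.ofFn Y).drop (i' + 1)).filterMap id) := by
    apply aux_sublist
    rw [List.forall₂_iff_get]
    constructor
    · simp
    · intro k h1 h2
      simp only [List.get_eq_getElem, List.getElem_drop, List.getElem_ofFn]
      intro hx
      exact hsub _ hx
  -- altOf X ≥ 1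
  have h1le : 1 ≤ altOf X := by
    rw [haltX]
    apply le_csSup hbddX
    exact ⟨[a], List.isChain_singleton a, by rw [hlX]; exact (List.nil_sublist _).cons₂ a, rfl⟩
  -- get optimal L
  have hmem : altOf X ∈ SX := by
    rw [haltX]; exact Nat.sSup_mem hneX hbddX
  obtain ⟨L, hLchain, hLsub, hLlen⟩ := hmem
  have hLne : L ≠ [] := by
    intro h; rw [h] at hLlen; simp at hLlen; omega
  obtain ⟨c, Lt, rfl⟩ := List.exists_cons_of_ne_nil hLne
  by_cases hcb : c = b
  · -- head of L is b; since a ≠ b, prepend a to L inside X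
    have hLsub' : (c :: Lt).Sublist (((List.ofFn X).drop (i + 1)).filterMap id) := by
      rw [hlX] at hLsub
      cases hLsub with
      | cons _ h => exact h
      | cons_cons => exact absurd (hcb ▸ rfl) hab
    have : altOf X + 1 ≤ altOf X := by
      conv_rhs => rw [haltX]
      apply le_csSup hbddX
      refine ⟨a :: c :: Lt, ?_, ?_, by simp [← hLlen]⟩
      · exact List.IsChain.cons_cons (by rw [hcb]; exact hab) hLchain
      · rw [hlX]; exact hLsub'.cons₂ a
    omega
  · -- head of L is not b; prepend b to L inside Y
    have hLsubY : (c :: Lt).Sublist (((List.ofFn Y).drop (i' + 1)).filterMap id) :=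
      (hlX2 ▸ hLsub).trans hdropXY
    have : altOf X + 1 ≤ altOf Y := by
      rw [haltY]
      apply le_csSup hbddY
      refine ⟨b :: c :: Lt, ?_, ?_, by simp [← hLlen]⟩
      · exact List.IsChain.cons_cons (fun h => hcb h.symm) hLchain
      · rw [hlY]; exact hLsubY.cons₂ b
    omega
end

section
/- For X ∈ {+,-,0}^n with alt(X) ≥ 2k, both X^+ = {i : x_i = +} and X^- = {i : x_i = -} contain a k-element subset S ⊆ [n] that is 2-stable, i.e., any two distinct elements of S are at distance at least 2 apart (and 1 and n do not both belong to S). -/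
/-- `altSign X` is the length of the longest alternating subsequence of nonzero signs
in the sign vector `X`. -/
noncomputable def altSign {n : ℕ} (X : Fin n → SignType) : ℕ :=
  sSup {m | ∃ l : List SignType, l.Chain' (· ≠ ·) ∧ (∀ a ∈ l, a ≠ 0) ∧
    l.Sublist (List.ofFn X) ∧ l.length = m}

/-- `S` (a set of positions among `0,…,n-1`, i.e. of `[n]`) is `2`-stable on the
`n`-cycle: any two distinct elements are at distance at least `2` and at most `n-2`. -/
def CycStable2 {n : ℕ} (S : Finset (Fin n)) : Prop :=
  ∀ i ∈ S, ∀ j ∈ S, (i : ℕ) < (j : ℕ) →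
    (i : ℕ) + 2 ≤ (j : ℕ) ∧ (j : ℕ) ≤ (i : ℕ) + n - 2

lemma sign_flip : ∀ a b : SignType, a ≠ 0 → b ≠ 0 → a ≠ b → b = -a := by decide

lemma key_lemma (n k : ℕ) (hk : 1 ≤ k) (X : Fin n → SignType)
    (g : Fin (2 * k) → Fin n) (hmono : StrictMono g) (s : SignType)
    (hval : ∀ t : Fin (2 * k), X (g t) = if Even (t : ℕ) then s else -s) :
    (∃ S : Finset (Fin n), S.card = k ∧ (∀ i ∈ S, X i = s) ∧ CycStable2 S) ∧
    (∃ S : Finset (Fin n), S.card = k ∧ (∀ i ∈ S, X i = -s) ∧ CycStable2 S) := by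
  have hg : ∀ (d : ℕ) (a b : Fin (2*k)), (a:ℕ) + d ≤ (b:ℕ) → (g a : ℕ) + d ≤ (g b : ℕ) := by
    intro d
    induction d with
    | zero =>
      intro a b hab
      have : g a ≤ g b := hmono.monotone (by rw [Fin.le_def]; omega)
      rw [Fin.le_def] at this
      omega
    | succ d ih =>
      intro a b hab
      have hb : 0 < (b:ℕ) := by omega
      have h1 := ih a ⟨(b:ℕ)-1, by omega⟩ (by simp; omega)
      have h2 : g ⟨(b:ℕ)-1, by omega⟩ < g b := hmono (by rw [Fin.lt_def]; simp; omega)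
      rw [Fin.lt_def] at h2
      omega
  constructor
  · refine ⟨Finset.image (fun t : Fin k => g ⟨2*t, by omega⟩) Finset.univ, ?_, ?_, ?_⟩
    · rw [Finset.card_image_of_injective _ ?_, Finset.card_univ, Fintype.card_fin]
      intro a b hab
      by_contra hne
      rcases lt_or_gt_of_ne hne with hlt | hlt
      · exact absurd hab (ne_of_lt (hmono (by rw [Fin.lt_def]; simp; omega)))
      · exact absurd hab.symm (ne_of_lt (hmono (by rw [Fin.lt_def]; simp; omega)))
    · intro i hi
      rw [Finset.mem_image] at hi
      obtain ⟨t, -, rfl⟩ := hi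
      rw [hval]
      simp [Nat.even_mul]
    · intro i hi j hj hij
      rw [Finset.mem_image] at hi hj
      obtain ⟨a, -, rfl⟩ := hi
      obtain ⟨b, -, rfl⟩ := hj
      have hab : (a:ℕ) < (b:ℕ) := by
        rcases lt_trichotomy (a:ℕ) (b:ℕ) with h' | h' | h'
        · exact h'
        · have hab2 : a = b := Fin.ext h'; subst hab2; exact absurd hij (lt_irrefl _)
        · have := hmono (show (⟨2*(b:ℕ), by omega⟩ : Fin (2*k)) < ⟨2*(a:ℕ), by omega⟩ by
            rw [Fin.lt_def]; simp; omega)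
          rw [Fin.lt_def] at this
          omega
      have h1 := hg 2 ⟨2*(a:ℕ), by omega⟩ ⟨2*(b:ℕ), by omega⟩ (by simp; omega)
      have h2 := hg 1 ⟨2*(b:ℕ), by omega⟩ ⟨2*(b:ℕ)+1, by omega⟩ (by simp)
      have h3 := (g (⟨2*(b:ℕ)+1, by omega⟩ : Fin (2*k))).isLt
      have h4 := (g (⟨2*(a:ℕ), by omega⟩ : Fin (2*k))).isLt
      omega
  · refine ⟨Finset.image (fun t : Fin k => g ⟨2*t+1, by omega⟩) Finset.univ, ?_, ?_, ?_⟩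
    · rw [Finset.card_image_of_injective _ ?_, Finset.card_univ, Fintype.card_fin]
      intro a b hab
      by_contra hne
      rcases lt_or_gt_of_ne hne with hlt | hlt
      · exact absurd hab (ne_of_lt (hmono (by rw [Fin.lt_def]; simp; omega)))
      · exact absurd hab.symm (ne_of_lt (hmono (by rw [Fin.lt_def]; simp; omega)))
    · intro i hi
      rw [Finset.mem_image] at hi
      obtain ⟨t, -, rfl⟩ := hi
      rw [hval]
      simp [Nat.even_mul, Nat.even_add_one]
    · intro i hi j hj hij
      rw [Finset.mem_image] at hi hj
      obtain ⟨a, -, rfl⟩ := hi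
      obtain ⟨b, -, rfl⟩ := hj
      have hab : (a:ℕ) < (b:ℕ) := by
        rcases lt_trichotomy (a:ℕ) (b:ℕ) with h' | h' | h'
        · exact h'
        · have hab2 : a = b := Fin.ext h'; subst hab2; exact absurd hij (lt_irrefl _)
        · have := hmono (show (⟨2*(b:ℕ)+1, by omega⟩ : Fin (2*k)) < ⟨2*(a:ℕ)+1, by omega⟩ by
            rw [Fin.lt_def]; simp; omega)
          rw [Fin.lt_def] at this
          omega
      have h1 := hg 2 ⟨2*(a:ℕ)+1, by omega⟩ ⟨2*(b:ℕ)+1, by omega⟩ (by simp; omega)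
      have h2 := hg 1 ⟨0, by omega⟩ ⟨2*(a:ℕ)+1, by omega⟩ (by simp)
      have h3 := (g (⟨2*(b:ℕ)+1, by omega⟩ : Fin (2*k))).isLt
      omega


/-- If `alt(X) ≥ 2k`, both the set of plus positions and the set of minus positions
of `X` contain a `2`-stable `k`-subset. -/
theorem stmt_5 (n k : ℕ) (hk : 1 ≤ k) (X : Fin n → SignType)
    (h : 2 * k ≤ altSign X) :
    (∃ S : Finset (Fin n), S.card = k ∧ (∀ i ∈ S, X i = SignType.pos) ∧ CycStable2 S) ∧
    (∃ S : Finset (Fin n), S.card = k ∧ (∀ i ∈ S, X i = SignType.neg) ∧ CycStable2 S) := by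
  -- the sup is attained
  have hne : {m | ∃ l : List SignType, l.Chain' (· ≠ ·) ∧ (∀ a ∈ l, a ≠ 0) ∧
      l.Sublist (List.ofFn X) ∧ l.length = m}.Nonempty :=
    ⟨0, [], List.isChain_nil, by simp, List.nil_sublist _, rfl⟩
  have hbdd : BddAbove {m | ∃ l : List SignType, l.Chain' (· ≠ ·) ∧ (∀ a ∈ l, a ≠ 0) ∧
      l.Sublist (List.ofFn X) ∧ l.length = m} := by
    refine ⟨n, ?_⟩
    rintro m ⟨l, -, -, hsub, hlen⟩
    have := hsub.length_le
    rw [List.length_ofFn] at this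
    omega
  have hmem := Nat.sSup_mem hne hbdd
  obtain ⟨l, hchain, hnz, hsub, hlen⟩ := hmem
  unfold altSign at h
  have hlk : 2 * k ≤ l.length := by omega
  -- truncate to length 2k
  set l' := l.take (2 * k) with hl'
  have hlen' : l'.length = 2 * k := by rw [hl', List.length_take]; omega
  have hchain' : l'.Chain' (· ≠ ·) := hchain.take _
  have hnz' : ∀ a ∈ l', a ≠ 0 := fun a ha => hnz a ((List.take_sublist _ _).subset ha)
  have hsub' : l'.Sublist (List.ofFn X) := (List.take_sublist _ _).trans hsub
  obtain ⟨f, hf⟩ := List.sublist_iff_exists_fin_orderEmbedding_get_eq.mp hsub'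
  set g : Fin (2 * k) → Fin n :=
    fun t => Fin.cast List.length_ofFn (f (Fin.cast hlen'.symm t)) with hgdef
  have hmonog : StrictMono g := by
    intro a b hab
    have h1 : Fin.cast hlen'.symm a < Fin.cast hlen'.symm b := by
      rw [Fin.lt_def] at hab ⊢; simpa using hab
    have h2 := f.strictMono h1
    rw [Fin.lt_def] at h2 ⊢
    simpa [hgdef] using h2
  have hvalg : ∀ t : Fin (2 * k), X (g t) = l'.get (Fin.cast hlen'.symm t) := by
    intro t
    rw [hf (Fin.cast hlen'.symm t), List.get_ofFn]
  have h0 : 0 < l'.length := by omega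
  obtain ⟨s, hsdef⟩ : ∃ s : SignType, l'.get ⟨0, h0⟩ = s := ⟨_, rfl⟩
  have hs0 : s ≠ 0 := hsdef ▸ hnz' _ (l'.get_mem _)
  have halt : ∀ (i : ℕ) (hi : i < l'.length),
      l'.get ⟨i, hi⟩ = if Even i then s else -s := by
    intro i
    induction i with
    | zero => intro hi; rw [if_pos Even.zero, ← hsdef]
    | succ i ih =>
      intro hi
      have hi' : i < l'.length := by omega
      have hstep := List.isChain_iff_getElem.mp hchain' i (by omega)
      have hflip : l'.get ⟨i + 1, hi⟩ = -(l'.get ⟨i, hi'⟩) :=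
        sign_flip _ _ (hnz' _ (l'.get_mem _)) (hnz' _ (l'.get_mem _)) hstep
      rw [hflip, ih hi']
      rcases Nat.even_or_odd i with hpar | hpar
      · simp [hpar, Nat.even_add_one]
      · simp [Nat.not_even_iff_odd.mpr hpar, Nat.even_add_one]
  have hval : ∀ t : Fin (2 * k), X (g t) = if Even (t : ℕ) then s else -s := by
    intro t
    rw [hvalg t]
    exact halt (t : ℕ) (by omega)
  have key := key_lemma n k hk X g hmonog s hval
  cases s with
  | zero => exact absurd rfl hs0
  | pos =>
    refine ⟨key.1, ?_⟩
    obtain ⟨S, h1, h2, h3⟩ := key.2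
    exact ⟨S, h1, fun i hi => (h2 i hi).trans (by decide), h3⟩
  | neg =>
    refine ⟨?_, key.1⟩
    obtain ⟨S, h1, h2, h3⟩ := key.2
    exact ⟨S, h1, fun i hi => (h2 i hi).trans (by decide), h3⟩
end

section
/- (Erdős coloring / upper bound) For n ≥ rk, the Kneser hypergraph KG^r([n] choose k), whose vertices are all k-subsets of [n] and whose edges are the r-tuples of pairwise disjoint k-subsets, admits a proper coloring with ⌈(n-(k-1)r)/(r-1)⌉ colors; hence χ(KG^r([n] choose k)) ≤ ⌈(n-(k-1)r)/(r-1)⌉. -/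
/-- `c` is a proper coloring of the Kneser hypergraph `KG^r([n] choose k)`, whose
vertices are all `k`-subsets of `[n] = {1,…,n}` and whose edges are the `r`-tuples
of pairwise disjoint `k`-subsets. -/
def IsProperColKneser (r n k t : ℕ) (c : Finset ℕ → Fin t) : Prop :=
  ∀ f : Fin r → Finset ℕ, (∀ i, f i ⊆ Finset.Icc 1 n ∧ (f i).card = k) →
    (∀ i j, i ≠ j → Disjoint (f i) (f j)) → ∃ i j, c (f i) ≠ c (f j)

/-- The minimum of a finset of naturals, defaulting to 1 for the empty set. -/
noncomputable def minDef (A : Finset ℕ) : ℕ :=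
  if h : A.Nonempty then A.min' h else 1

/-- (Erdős coloring) For `n ≥ rk`, the Kneser hypergraph `KG^r([n] choose k)` admits a
proper coloring with `⌈(n-(k-1)r)/(r-1)⌉` colors; hence its chromatic number is at
most `⌈(n-(k-1)r)/(r-1)⌉`. -/
theorem stmt_10 (n k r : ℕ) (hk : 1 ≤ k) (hr : 2 ≤ r) (hn : r * k ≤ n) :
    ∃ c : Finset ℕ → Fin (⌈((n : ℚ) - ((k : ℚ) - 1) * r) / ((r : ℚ) - 1)⌉.toNat),
      IsProperColKneser r n k _ c := by
  set x : ℚ := ((n : ℚ) - ((k : ℚ) - 1) * r) / ((r : ℚ) - 1) with hx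
  set t : ℕ := ⌈x⌉.toNat with ht
  have hr1 : (0 : ℚ) < (r : ℚ) - 1 := by
    have : (2 : ℚ) ≤ (r : ℚ) := by exact_mod_cast hr
    linarith
  have hxpos : 0 < x := by
    apply div_pos _ hr1
    have h1 : ((r : ℚ) * k) ≤ (n : ℚ) := by exact_mod_cast hn
    have h2 : (2 : ℚ) ≤ (r : ℚ) := by exact_mod_cast hr
    have h3 : (1 : ℚ) ≤ (k : ℚ) := by exact_mod_cast hk
    nlinarith
  have htpos : 1 ≤ t := by
    have : 0 < ⌈x⌉ := Int.ceil_pos.mpr hxpos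
    omega
  -- key inequality : n ≤ t*(r-1) + (k-1)*r  (in ℕ)
  have hkey : n ≤ t * (r - 1) + (k - 1) * r := by
    have h1 : x ≤ (t : ℚ) := by
      have h2 : (⌈x⌉ : ℚ) ≤ ((⌈x⌉.toNat : ℤ) : ℚ) := by
        exact_mod_cast Int.self_le_toNat ⌈x⌉
      calc x ≤ (⌈x⌉ : ℚ) := Int.le_ceil x
        _ ≤ ((⌈x⌉.toNat : ℤ) : ℚ) := h2
        _ = (t : ℚ) := by push_cast [ht]; ring
    have h3 : (n : ℚ) - ((k : ℚ) - 1) * r ≤ (t : ℚ) * ((r : ℚ) - 1) := by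
      have := mul_le_mul_of_nonneg_right h1 (le_of_lt hr1)
      rw [hx] at this
      rwa [div_mul_cancel₀ _ (ne_of_gt hr1)] at this
    have h4 : (n : ℚ) ≤ ((t * (r - 1) + (k - 1) * r : ℕ) : ℚ) := by
      push_cast [Nat.cast_sub (by omega : 1 ≤ r), Nat.cast_sub hk]
      linarith
    exact_mod_cast h4
  have hkey2 : n + 1 ≤ (t - 1) * (r - 1) + k * r := by
    have e1 : t * (r - 1) = (t - 1) * (r - 1) + (r - 1) := by
      obtain ⟨s, hs⟩ : ∃ s, t = s + 1 := ⟨t - 1, by omega⟩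
      rw [hs, Nat.add_sub_cancel, Nat.add_mul, one_mul]
    have e2 : (k - 1) * r + r = k * r := by
      obtain ⟨u, hu⟩ : ∃ u, k = u + 1 := ⟨k - 1, by omega⟩
      rw [hu, Nat.add_sub_cancel, Nat.add_mul, one_mul]
    omega
  refine ⟨fun A => ⟨min ((minDef A - 1) / (r - 1)) (t - 1), by omega⟩, ?_⟩
  intro f hf hdisj
  by_contra hcon
  push_neg at hcon
  have hne : ∀ i, (f i).Nonempty := fun i =>
    Finset.card_pos.mp (by rw [(hf i).2]; omega)
  set m : Fin r → ℕ := fun i => (f i).min' (hne i) with hm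
  have hmd : ∀ i, minDef (f i) = m i := fun i => dif_pos (hne i)
  have hmem : ∀ i, m i ∈ f i := fun i => (f i).min'_mem (hne i)
  have hm1 : ∀ i, 1 ≤ m i := fun i => by
    have := (hf i).1 (hmem i)
    simp [Finset.mem_Icc] at this; omega
  have hmn : ∀ i, m i ≤ n := fun i => by
    have := (hf i).1 (hmem i)
    simp [Finset.mem_Icc] at this; omega
  set v : Fin r → ℕ := fun i => (m i - 1) / (r - 1) with hv
  have hval : ∀ i, min (v i) (t - 1) = min (v ⟨0, by omega⟩) (t - 1) := by
    intro i
    have := hcon i ⟨0, by omega⟩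
    have := Fin.mk.inj_iff.mp this
    simpa [hmd, hv] using this
  by_cases hc : min (v ⟨0, by omega⟩) (t - 1) < t - 1
  · -- all mins lie in an interval of length r-1; pigeonhole
    set q : ℕ := min (v ⟨0, by omega⟩) (t - 1) with hq
    have hvq : ∀ i, v i = q := fun i => by have := hval i; omega
    have hbound : ∀ i, m i ∈ Finset.Icc (q * (r - 1) + 1) (q * (r - 1) + (r - 1)) := by
      intro i
      have h1 : q * (r - 1) ≤ m i - 1 := by
        rw [← hvq i, hv]
        exact Nat.div_mul_le_self _ _
      have h2 : m i - 1 < (q + 1) * (r - 1) := by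
        have : v i < q + 1 := by rw [hvq i]; omega
        rw [hv] at this
        exact (Nat.div_lt_iff_lt_mul (by omega)).mp this
      have h3 : (q + 1) * (r - 1) = q * (r - 1) + (r - 1) := by ring
      simp only [Finset.mem_Icc]
      have := hm1 i
      omega
    have hinj : Set.InjOn m (Finset.univ : Finset (Fin r)) := by
      intro i _ j _ hij
      by_contra hne'
      have := hdisj i j hne'
      exact (Finset.disjoint_left.mp this (hmem i) (hij ▸ hmem j)).elim
    have hcard := Finset.card_le_card_of_injOn m (fun i _ => hbound i) hinj
    rw [Finset.card_univ, Fintype.card_fin, Nat.card_Icc] at hcard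
    omega
  · -- all sets live in the short tail interval
    have hvt : ∀ i, t - 1 ≤ v i := fun i => by have := hval i; omega
    have hmi : ∀ i, (t - 1) * (r - 1) + 1 ≤ m i := by
      intro i
      have := (Nat.le_div_iff_mul_le (by omega : 0 < r - 1)).mp (hvt i)
      have := hm1 i
      omega
    have hsub : (Finset.univ : Finset (Fin r)).biUnion f ⊆
        Finset.Icc ((t - 1) * (r - 1) + 1) n := by
      intro a ha
      rcases Finset.mem_biUnion.mp ha with ⟨i, _, hai⟩
      have h1 : m i ≤ a := (f i).min'_le a hai
      have h2 := (hf i).1 hai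
      simp [Finset.mem_Icc] at h2 ⊢
      exact ⟨le_trans (hmi i) h1, h2.2⟩
    have hcard1 : ((Finset.univ : Finset (Fin r)).biUnion f).card = r * k := by
      rw [Finset.card_biUnion (fun i _ j _ hij => hdisj i j hij)]
      simp [(fun i => (hf i).2)]
    have hcard2 := Finset.card_le_card hsub
    rw [hcard1, Nat.card_Icc] at hcard2
    have hcomm : r * k = k * r := Nat.mul_comm r k
    have hpos : 0 < r * k := Nat.mul_pos (by omega) (by omega)
    omega
end

section
/- (Multiplicativity lemma) Let r_1, r_2, s_1, s_2 ≥ 1 and r = r_1 r_2, s = s_1 s_2. Suppose that for i = 1, 2 and for all n, k with n ≥ r_i k, the chromatic number of the almost s_i-stable Kneser hypergraph KG^{r_i}([n] choose k)~_{s_i-stab} equals ⌈(n-(k-1)r_i)/(r_i-1)⌉. Then for all n, k with n ≥ rk, the chromatic number of KG^r([n] choose k)~_{s-stab} equals ⌈(n-(k-1)r)/(r-1)⌉. -/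
/-- `S` has all pairwise distances at least `s`. -/
def stab (s : ℕ) (S : Finset ℕ) : Prop :=
  ∀ i ∈ S, ∀ j ∈ S, i ≠ j → i + s ≤ j ∨ j + s ≤ i

/-- `V n k s`: the `k`-subsets of `[n] = {1,…,n}` with pairwise distances at least `s`. -/
def V (n k s : ℕ) : Set (Finset ℕ) :=
  {S | S ⊆ Finset.Icc 1 n ∧ S.card = k ∧ stab s S}

/-- `c` is a proper coloring of `KG^r([n] choose k)~_{s-stab}`. -/
def IsProperCol (r n k s t : ℕ) (c : Finset ℕ → Fin t) : Prop :=
  ∀ f : Fin r → Finset ℕ, (∀ i, f i ∈ V n k s) →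
    (∀ i j, i ≠ j → Disjoint (f i) (f j)) → ∃ i j, c (f i) ≠ c (f j)

/-- The chromatic number of `KG^r([n] choose k)~_{s-stab}` equals
`⌈(n-(k-1)r)/(r-1)⌉`. -/
def ChromEq (r s n k : ℕ) : Prop :=
  IsLeast {t : ℕ | ∃ c : Finset ℕ → Fin t, IsProperCol r n k s t c}
    (⌈((n : ℚ) - ((k : ℚ) - 1) * r) / ((r : ℚ) - 1)⌉.toNat)

/-! ### Auxiliary machinery -/

noncomputable def val (r n k : ℕ) : ℕ :=
  (⌈((n : ℚ) - ((k : ℚ) - 1) * r) / ((r : ℚ) - 1)⌉).toNat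

lemma chromEq_iff (r s n k : ℕ) :
    ChromEq r s n k ↔
      IsLeast {t : ℕ | ∃ c : Finset ℕ → Fin t, IsProperCol r n k s t c} (val r n k) :=
  Iff.rfl

lemma t_lt_val {r' n' k' t : ℕ} (hr' : 2 ≤ r') (hk' : 1 ≤ k')
    (h : t * (r' - 1) + (k' - 1) * r' < n') : t < val r' n' k' := by
  have hden : (0:ℚ) < (r':ℚ) - 1 := by
    have : (2:ℚ) ≤ (r':ℚ) := by exact_mod_cast hr'
    linarith
  have hQ : (t:ℚ) * ((r':ℚ)-1) + ((k':ℚ)-1) * (r':ℚ) < (n':ℚ) := by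
    have h2 := h
    zify [show 1 ≤ r' by omega, hk'] at h2
    exact_mod_cast h2
  have hx : (t:ℚ) < ((n' : ℚ) - ((k' : ℚ) - 1) * r') / ((r' : ℚ) - 1) := by
    rw [lt_div_iff₀ hden]; linarith
  have : (t:ℤ) < ⌈((n' : ℚ) - ((k' : ℚ) - 1) * r') / ((r' : ℚ) - 1)⌉ := by
    rw [Int.lt_ceil]; exact_mod_cast hx
  unfold val
  omega

lemma sub_mul_id (v r : ℕ) (hv : 1 ≤ v) (hr : 1 ≤ r) : (v-1)*(r-1) + v + r = v*r + 1 := by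
  obtain ⟨v', rfl⟩ := Nat.exists_eq_add_of_le hv
  obtain ⟨r', rfl⟩ := Nat.exists_eq_add_of_le hr
  simp [Nat.add_sub_cancel_left]
  ring

lemma pred_mul (k r : ℕ) (hk : 1 ≤ k) : (k-1)*r + r = k*r := by
  obtain ⟨k', rfl⟩ := Nat.exists_eq_add_of_le hk
  simp [Nat.add_sub_cancel_left]
  ring

lemma val_facts (r n k : ℕ) (hr : 2 ≤ r) (hk : 1 ≤ k) (hn : r * k ≤ n) :
    1 ≤ val r n k ∧ n + r + val r n k ≤ val r n k * r + k * r ∧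
      val r n k * r + k * r + 1 < n + val r n k + 2 * r := by
  set x : ℚ := ((n : ℚ) - ((k : ℚ) - 1) * r) / ((r : ℚ) - 1) with hxdef
  have hval : val r n k = (⌈x⌉).toNat := rfl
  have hden : (0:ℚ) < (r:ℚ) - 1 := by
    have : (2:ℚ) ≤ (r:ℚ) := by exact_mod_cast hr
    linarith
  have hnum : (0:ℚ) < (n : ℚ) - ((k : ℚ) - 1) * r := by
    have h1 : (r:ℚ) * k ≤ n := by exact_mod_cast hn
    have h2 : (0:ℚ) < r := by linarith
    nlinarith
  have hxpos : 0 < x := div_pos hnum hden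
  have hceilpos : (0:ℤ) < ⌈x⌉ := by rw [Int.lt_ceil]; exact_mod_cast hxpos
  have hv1 : 1 ≤ val r n k := by rw [hval]; omega
  have hcast : ((val r n k : ℕ) : ℚ) = ((⌈x⌉ : ℤ) : ℚ) := by
    rw [hval]; exact_mod_cast Int.toNat_of_nonneg hceilpos.le
  have hge : x ≤ (val r n k : ℚ) := by rw [hcast]; exact Int.le_ceil x
  have hlt : (val r n k : ℚ) < x + 1 := by rw [hcast]; exact Int.ceil_lt_add_one x
  have hA : (n : ℚ) - ((k : ℚ) - 1) * r ≤ (val r n k : ℚ) * ((r:ℚ)-1) := by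
    rw [hxdef, div_le_iff₀ hden] at hge; linarith
  have hB : ((val r n k : ℚ) - 1) * ((r:ℚ)-1) < (n : ℚ) - ((k : ℚ) - 1) * r := by
    have h3 : (val r n k : ℚ) - 1 < x := by linarith
    rw [hxdef, lt_div_iff₀ hden] at h3
    linarith
  refine ⟨hv1, ?_, ?_⟩
  · have : ((n + r + val r n k : ℕ) : ℚ) ≤ ((val r n k * r + k * r : ℕ) : ℚ) := by
      push_cast; nlinarith
    exact_mod_cast this
  · have : ((val r n k * r + k * r + 1 : ℕ) : ℚ) < ((n + val r n k + 2 * r : ℕ) : ℚ) := by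
      push_cast; nlinarith
    exact_mod_cast this

/-! ### The order embedding of `[m]` into an `m`-set `A` -/

noncomputable def phi (A : Finset ℕ) (i : ℕ) : ℕ :=
  if h : i - 1 < A.card then (A.orderIsoOfFin rfl ⟨i - 1, h⟩ : ℕ) else 0

lemma phi_mem (A : Finset ℕ) (i : ℕ) (hi : i - 1 < A.card) : phi A i ∈ A := by
  rw [phi, dif_pos hi]; exact (A.orderIsoOfFin rfl ⟨i - 1, hi⟩).2

lemma phi_lt (A : Finset ℕ) {i j : ℕ} (h1 : 1 ≤ i) (hij : i < j) (hj : j - 1 < A.card) :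
    phi A i < phi A j := by
  have hi : i - 1 < A.card := by omega
  rw [phi, phi, dif_pos hi, dif_pos hj]
  exact (A.orderIsoOfFin rfl).strictMono (by simp [Fin.lt_def]; omega)

lemma phi_gap (A : Finset ℕ) {s : ℕ} (hA : stab s A) {i : ℕ} (h1 : 1 ≤ i) :
    ∀ d : ℕ, ∀ j : ℕ, i + d = j → j - 1 < A.card → phi A i + s * d ≤ phi A j := by
  intro d
  induction d with
  | zero =>
    intro j hj _
    have hji : j = i := by omega
    subst hji; simp
  | succ d ih =>
    intro j hj hjc
    have hj1 : j - 1 - 1 < A.card := by omega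
    have step : phi A (j-1) + s ≤ phi A j := by
      have h1' : phi A (j-1) < phi A j := phi_lt A (by omega) (by omega) hjc
      have := hA _ (phi_mem A (j-1) hj1) _ (phi_mem A j (by omega)) (by omega)
      omega
    have hih : phi A i + s * d ≤ phi A (j-1) := ih (j-1) (by omega) hj1
    have hmul : s * (d+1) = s * d + s := by ring
    omega

lemma phi_inj (A : Finset ℕ) {i j : ℕ} (hi1 : 1 ≤ i) (hi2 : i ≤ A.card)
    (hj1 : 1 ≤ j) (hj2 : j ≤ A.card) (h : phi A i = phi A j) : i = j := by
  rcases lt_trichotomy i j with h' | h' | h'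
  · exact absurd h (Nat.ne_of_lt (phi_lt A hi1 h' (by omega)))
  · exact h'
  · exact absurd h.symm (Nat.ne_of_lt (phi_lt A hj1 h' (by omega)))

lemma image_subset {m : ℕ} (A B : Finset ℕ) (hAc : A.card = m)
    (hB : B ⊆ Finset.Icc 1 m) : B.image (phi A) ⊆ A := by
  intro x hx
  obtain ⟨i, hiB, rfl⟩ := Finset.mem_image.mp hx
  have := Finset.mem_Icc.mp (hB hiB)
  exact phi_mem A i (by omega)

lemma image_mem_V {n m k s₁ s₂ : ℕ} {A B : Finset ℕ}
    (hA : A ∈ V n m s₁) (hB : B ∈ V m k s₂) :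
    B.image (phi A) ∈ V n k (s₁ * s₂) := by
  obtain ⟨hA1, hA2, hA3⟩ := hA
  obtain ⟨hB1, hB2, hB3⟩ := hB
  have hmem : ∀ i ∈ B, 1 ≤ i ∧ i ≤ m := by
    intro i hi; exact Finset.mem_Icc.mp (hB1 hi)
  refine ⟨?_, ?_, ?_⟩
  · exact fun x hx => hA1 (image_subset A B hA2 hB1 hx)
  · rw [Finset.card_image_of_injOn, hB2]
    intro i hi j hj h
    exact phi_inj A (hmem i hi).1 (by rw [hA2]; exact (hmem i hi).2)
      (hmem j hj).1 (by rw [hA2]; exact (hmem j hj).2) h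
  · intro x hx y hy hxy
    obtain ⟨i, hiB, rfl⟩ := Finset.mem_image.mp hx
    obtain ⟨j, hjB, rfl⟩ := Finset.mem_image.mp hy
    have hi := hmem i hiB; have hj := hmem j hjB
    have hij : i ≠ j := by rintro rfl; exact hxy rfl
    have key : ∀ a b : ℕ, 1 ≤ a → b ≤ m → a + s₂ ≤ b → phi A a + s₁ * s₂ ≤ phi A b := by
      intro a b ha hbm hab
      have h1 : phi A a + s₁ * (b - a) ≤ phi A b :=
        phi_gap A hA3 ha (b - a) b (by omega) (by omega)
      have h2 : s₁ * s₂ ≤ s₁ * (b - a) := Nat.mul_le_mul_left _ (by omega)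
      omega
    rcases hB3 i hiB j hjB hij with h' | h'
    · exact Or.inl (key i j hi.1 hj.2 h')
    · exact Or.inr (key j i hj.1 hi.2 h')

lemma image_disjoint {m : ℕ} (A B₁ B₂ : Finset ℕ) (hAc : A.card = m)
    (h1 : B₁ ⊆ Finset.Icc 1 m) (h2 : B₂ ⊆ Finset.Icc 1 m) (h : Disjoint B₁ B₂) :
    Disjoint (B₁.image (phi A)) (B₂.image (phi A)) := by
  rw [Finset.disjoint_left]
  intro x hx hy
  obtain ⟨i, hiB, rfl⟩ := Finset.mem_image.mp hx
  obtain ⟨j, hjB, hji⟩ := Finset.mem_image.mp hy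
  have hi := Finset.mem_Icc.mp (h1 hiB)
  have hj := Finset.mem_Icc.mp (h2 hjB)
  have : j = i := phi_inj A hj.1 (by omega) hi.1 (by omega) hji
  subst this
  exact (Finset.disjoint_left.mp h hiB) hjB

/-! ### The explicit proper coloring (upper bound) -/

noncomputable def mu (S : Finset ℕ) : ℕ := if h : S.Nonempty then S.min' h else 0

lemma mu_mem {S : Finset ℕ} (h : S.Nonempty) : mu S ∈ S := by
  rw [mu, dif_pos h]; exact S.min'_mem h

lemma mu_le {S : Finset ℕ} {x : ℕ} (hx : x ∈ S) : mu S ≤ x := by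
  rw [mu, dif_pos ⟨x, hx⟩]; exact S.min'_le x hx

lemma exists_col (r n k s v : ℕ) (hr : 2 ≤ r) (hk : 1 ≤ k)
    (hv1 : 1 ≤ v) (hA : n + r + v ≤ v * r + k * r) :
    ∃ c : Finset ℕ → Fin v, IsProperCol r n k s v c := by
  refine ⟨fun S => ⟨min ((mu S - 1) / (r-1)) (v-1), by omega⟩, ?_⟩
  intro f hf hdisj
  by_contra hcon
  push_neg at hcon
  have hne : ∀ i, (f i).Nonempty := by
    intro i
    have := (hf i).2.1
    exact Finset.card_pos.mp (by omega)
  have hmem1 : ∀ i, 1 ≤ mu (f i) ∧ mu (f i) ≤ n := by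
    intro i
    have := (hf i).1 (mu_mem (hne i))
    exact Finset.mem_Icc.mp this
  set j0 : ℕ := min ((mu (f ⟨0, by omega⟩) - 1) / (r-1)) (v-1) with hj0
  have hcol : ∀ i, min ((mu (f i) - 1) / (r-1)) (v-1) = j0 := by
    intro i
    have := hcon i ⟨0, by omega⟩
    exact congrArg Fin.val this
  by_cases hcase : j0 < v - 1
  · have hwin : ∀ i, mu (f i) ∈ Finset.Icc (j0*(r-1)+1) (j0*(r-1)+(r-1)) := by
      intro i
      have h1 := hcol i
      have hdiv : (mu (f i) - 1) / (r-1) = j0 := by omega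
      have h2 := Nat.div_add_mod (mu (f i) - 1) (r-1)
      have h3 := Nat.mod_lt (mu (f i) - 1) (show 0 < r-1 by omega)
      rw [hdiv, Nat.mul_comm] at h2
      have h4 := (hmem1 i).1
      rw [Finset.mem_Icc]
      omega
    have hinj : Set.InjOn (fun i => mu (f i)) (Finset.univ : Finset (Fin r)) := by
      intro i _ j _ hij
      by_contra hne'
      have hd := hdisj i j hne'
      have hij' : mu (f i) = mu (f j) := hij
      have : mu (f i) ∈ f j := by rw [hij']; exact mu_mem (hne j)
      exact (Finset.disjoint_left.mp hd (mu_mem (hne i))) this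
    have hcard := Finset.card_le_card_of_injOn (fun i => mu (f i))
      (fun i _ => hwin i) hinj
    rw [Finset.card_univ, Fintype.card_fin, Nat.card_Icc] at hcard
    have : j0*(r-1)+(r-1) + 1 - (j0*(r-1)+1) = r - 1 := by omega
    omega
  · have hsub : ∀ i, f i ⊆ Finset.Icc ((v-1)*(r-1)+1) n := by
      intro i x hx
      have h1 := hcol i
      have hdiv : v - 1 ≤ (mu (f i) - 1) / (r-1) := by omega
      have h2 : (v-1) * (r-1) ≤ mu (f i) - 1 :=
        (Nat.le_div_iff_mul_le (by omega)).mp hdiv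
      have h3 := mu_le hx
      have h4 : x ≤ n := (Finset.mem_Icc.mp ((hf i).1 hx)).2
      have h5 := (hmem1 i).1
      rw [Finset.mem_Icc]
      omega
    have hUcard : (Finset.univ.biUnion f).card = r * k := by
      rw [Finset.card_biUnion (fun i _ j _ hij => hdisj i j hij)]
      have : ∀ i ∈ Finset.univ, (f i).card = k := fun i _ => (hf i).2.1
      rw [Finset.sum_congr rfl this, Finset.sum_const, Finset.card_univ,
        Fintype.card_fin, smul_eq_mul]
    have hUsub : Finset.univ.biUnion f ⊆ Finset.Icc ((v-1)*(r-1)+1) n := by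
      intro x hx
      obtain ⟨i, _, hxi⟩ := Finset.mem_biUnion.mp hx
      exact hsub i hxi
    have hle := Finset.card_le_card hUsub
    rw [hUcard, Nat.card_Icc] at hle
    have hid : (v-1)*(r-1) + v + r = v*r + 1 := sub_mul_id v r hv1 (by omega)
    have hcomm : r * k = k * r := Nat.mul_comm r k
    have hK1 : 1 ≤ k * r := Nat.mul_pos (by omega) (by omega)
    rw [hcomm] at hle
    generalize hP : v * r = P at hid hA
    generalize hw : (v-1)*(r-1) = w at hid hle
    generalize hK : k * r = K at hA hle hK1
    omega

lemma arith_key (r n k t v : ℕ) (hr : 2 ≤ r) (hk : 1 ≤ k) (hlt : t < v)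
    (hvB : v*r + k*r + 1 < n + v + 2*r) : t*(r-1) + (k-1)*r + 1 ≤ n := by
  have hltz : (t:ℤ) ≤ (v:ℤ) - 1 := by
    have : (t:ℤ) < (v:ℤ) := by exact_mod_cast hlt
    linarith
  have hvBz : (v:ℤ)*r + (k:ℤ)*r + 1 < (n:ℤ) + v + 2*r := by exact_mod_cast hvB
  have hrz : (2:ℤ) ≤ (r:ℤ) := by exact_mod_cast hr
  zify [show 1 ≤ r by omega, hk]
  nlinarith [mul_le_mul_of_nonneg_right hltz (show (0:ℤ) ≤ (r:ℤ) - 1 by linarith)]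

lemma arith_m2 (r₂ k t m : ℕ) (ht1 : 1 ≤ t) (hk : 1 ≤ k) (hr₂ : 2 ≤ r₂)
    (hm : m = (k-1)*r₂ + t*(r₂-1) + 1) : r₂ * k ≤ m := by
  have hmz : (m:ℤ) = ((k:ℤ)-1)*r₂ + (t:ℤ)*((r₂:ℤ)-1) + 1 := by
    rw [hm]; push_cast [Nat.cast_sub hk, Nat.cast_sub (show 1 ≤ r₂ by omega)]; ring
  have ht1z : (1:ℤ) ≤ (t:ℤ) := by exact_mod_cast ht1
  have hr₂z : (2:ℤ) ≤ (r₂:ℤ) := by exact_mod_cast hr₂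
  zify
  rw [hmz]
  nlinarith [mul_le_mul_of_nonneg_right ht1z (show (0:ℤ) ≤ (r₂:ℤ) - 1 by linarith)]

lemma arith_th1 (r₁ r₂ k t m n : ℕ) (hr₁ : 2 ≤ r₁) (hr₂ : 2 ≤ r₂) (hk : 1 ≤ k)
    (hm : m = (k-1)*r₂ + t*(r₂-1) + 1)
    (hKey : t*(r₁*r₂-1) + (k-1)*(r₁*r₂) + 1 ≤ n) : t*(r₁-1) + (m-1)*r₁ < n := by
  have hmz : (m:ℤ) = ((k:ℤ)-1)*r₂ + (t:ℤ)*((r₂:ℤ)-1) + 1 := by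
    rw [hm]; push_cast [Nat.cast_sub hk, Nat.cast_sub (show 1 ≤ r₂ by omega)]; ring
  have hKz : (t:ℤ) * ((r₁:ℤ)*r₂ - 1) + ((k:ℤ)-1)*((r₁:ℤ)*r₂) + 1 ≤ (n:ℤ) := by
    have := hKey
    zify [show 1 ≤ r₁*r₂ by nlinarith, hk] at this
    push_cast at this
    linarith
  have hm1 : 1 ≤ m := by omega
  zify [show 1 ≤ r₁ by omega, hm1]
  rw [hmz]
  nlinarith [hKz]

lemma arith_m1n (r₁ r₂ k t m n : ℕ) (hr₁ : 2 ≤ r₁) (hr₂ : 2 ≤ r₂) (hk : 1 ≤ k) (ht1 : 1 ≤ t)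
    (hm : m = (k-1)*r₂ + t*(r₂-1) + 1)
    (hKey : t*(r₁*r₂-1) + (k-1)*(r₁*r₂) + 1 ≤ n) : r₁ * m ≤ n := by
  have hmz : (m:ℤ) = ((k:ℤ)-1)*r₂ + (t:ℤ)*((r₂:ℤ)-1) + 1 := by
    rw [hm]; push_cast [Nat.cast_sub hk, Nat.cast_sub (show 1 ≤ r₂ by omega)]; ring
  have hKz : (t:ℤ) * ((r₁:ℤ)*r₂ - 1) + ((k:ℤ)-1)*((r₁:ℤ)*r₂) + 1 ≤ (n:ℤ) := by
    have := hKey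
    zify [show 1 ≤ r₁*r₂ by nlinarith, hk] at this
    push_cast at this
    linarith
  have ht1z : (1:ℤ) ≤ (t:ℤ) := by exact_mod_cast ht1
  have hr₁z : (2:ℤ) ≤ (r₁:ℤ) := by exact_mod_cast hr₁
  zify
  rw [hmz]
  nlinarith [hKz, mul_le_mul_of_nonneg_right ht1z (show (0:ℤ) ≤ (r₁:ℤ) - 1 by linarith)]

/-! ### Degenerate case: `r = 1` is impossible -/

lemma chrom_one (s' : ℕ) : ¬ ChromEq 1 s' 1 1 := by
  intro h
  obtain ⟨c, -⟩ := h.1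
  have hN : (⌈(((1:ℕ) : ℚ) - (((1:ℕ) : ℚ) - 1) * ((1:ℕ):ℚ)) / (((1:ℕ):ℚ) - 1)⌉).toNat = 0 := by
    norm_num
  have hlt := (c ∅).isLt
  omega

/-! ### The main theorem -/

/-- (Multiplicativity lemma) If the chromatic number of the almost `s_i`-stable Kneser
hypergraph `KG^{r_i}([n] choose k)~_{s_i-stab}` equals `⌈(n-(k-1)r_i)/(r_i-1)⌉`
whenever `n ≥ r_i k` (for `i = 1,2`), then for `r = r_1 r_2` and `s = s_1 s_2` the
chromatic number of `KG^r([n] choose k)~_{s-stab}` equals `⌈(n-(k-1)r)/(r-1)⌉`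
whenever `n ≥ rk`. -/
theorem stmt_12 (r₁ r₂ s₁ s₂ : ℕ) (hr₁ : 1 ≤ r₁) (hr₂ : 1 ≤ r₂)
    (hs₁ : 1 ≤ s₁) (hs₂ : 1 ≤ s₂)
    (h1 : ∀ n k : ℕ, 1 ≤ k → r₁ * k ≤ n → ChromEq r₁ s₁ n k)
    (h2 : ∀ n k : ℕ, 1 ≤ k → r₂ * k ≤ n → ChromEq r₂ s₂ n k) :
    ∀ n k : ℕ, 1 ≤ k → (r₁ * r₂) * k ≤ n → ChromEq (r₁ * r₂) (s₁ * s₂) n k := by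
  classical
  -- rule out r₁ = 1 and r₂ = 1
  rcases Nat.lt_or_ge r₁ 2 with hr₁' | hr₁'
  · have hr1 : r₁ = 1 := by omega
    exact absurd (h1 1 1 le_rfl (by omega)) (hr1 ▸ chrom_one s₁)
  rcases Nat.lt_or_ge r₂ 2 with hr₂' | hr₂'
  · have hr2 : r₂ = 1 := by omega
    exact absurd (h2 1 1 le_rfl (by omega)) (hr2 ▸ chrom_one s₂)
  intro n k hk hn
  have hr : 2 ≤ r₁ * r₂ := le_trans hr₁' (Nat.le_mul_of_pos_right r₁ (by omega))
  obtain ⟨hv1, hvA, hvB⟩ := val_facts (r₁ * r₂) n k hr hk hn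
  rw [chromEq_iff]
  constructor
  · -- membership: the explicit coloring
    exact exists_col (r₁*r₂) n k (s₁*s₂) (val (r₁*r₂) n k) hr hk hv1 hvA
  · -- lower bound
    intro t ht
    obtain ⟨c, hc⟩ := ht
    rcases Nat.eq_zero_or_pos t with rfl | ht1
    · exact (c ∅).elim0
    by_contra hlt
    push_neg at hlt
    have hKey : t * (r₁*r₂ - 1) + (k - 1) * (r₁*r₂) + 1 ≤ n :=
      arith_key (r₁*r₂) n k t (val (r₁*r₂) n k) hr hk hlt hvB
    obtain ⟨m, hm⟩ : ∃ m : ℕ, m = (k-1)*r₂ + t*(r₂-1) + 1 := ⟨_, rfl⟩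
    have hm1 : 1 ≤ m := by omega
    have hth2 : t < val r₂ m k := by
      apply t_lt_val hr₂' hk
      omega
    have hm2 : r₂ * k ≤ m := arith_m2 r₂ k t m ht1 hk hr₂' hm
    have hth1 : t < val r₁ n m :=
      t_lt_val hr₁' hm1 (arith_th1 r₁ r₂ k t m n hr₁' hr₂' hk hm hKey)
    have hm1n : r₁ * m ≤ n := arith_m1n r₁ r₂ k t m n hr₁' hr₂' hk ht1 hm hKey
    -- t-colorings of KG^{r₂}(m, k)_{s₂} are never proper
    have hnot2 : ∀ c' : Finset ℕ → Fin t, ¬ IsProperCol r₂ m k s₂ t c' := by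
      intro c' hp
      have := ((chromEq_iff r₂ s₂ m k).mp (h2 m k hk hm2)).2 ⟨c', hp⟩
      omega
    -- for every A ∈ V n m s₁, find a monochromatic r₂-family inside A
    have key : ∀ A : Finset ℕ, A ∈ V n m s₁ →
        ∃ f : Fin r₂ → Finset ℕ, (∀ j, f j ∈ V m k s₂) ∧
          (∀ p q, p ≠ q → Disjoint (f p) (f q)) ∧
          (∀ p q, c ((f p).image (phi A)) = c ((f q).image (phi A))) := by
      intro A hA
      have := hnot2 (fun B => c (B.image (phi A)))
      unfold IsProperCol at this
      push_neg at this
      obtain ⟨f, hf1, hf2, hf3⟩ := this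
      exact ⟨f, hf1, hf2, hf3⟩
    choose F hF1 hF2 hF3 using key
    -- the induced coloring on V n m s₁
    set cH : Finset ℕ → Fin t := fun A =>
      if h : A ∈ V n m s₁ then c ((F A h ⟨0, by omega⟩).image (phi A)) else c ∅ with hcH
    have hnot1 : ¬ IsProperCol r₁ n m s₁ t cH := by
      intro hp
      have := ((chromEq_iff r₁ s₁ n m).mp (h1 n m hm1 hm1n)).2 ⟨cH, hp⟩
      omega
    unfold IsProperCol at hnot1
    push_neg at hnot1
    obtain ⟨M, hM1, hM2, hM3⟩ := hnot1
    -- assemble the r₁·r₂ monochromatic family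
    set g : Fin (r₁ * r₂) → Finset ℕ := fun x =>
      (F (M (finProdFinEquiv.symm x).1) (hM1 _) ((finProdFinEquiv.symm x).2)).image
        (phi (M (finProdFinEquiv.symm x).1)) with hg
    have hgV : ∀ x, g x ∈ V n k (s₁ * s₂) := by
      intro x
      exact image_mem_V (hM1 _) (hF1 _ _ _)
    have hgD' : ∀ (p p' : Fin r₁) (q q' : Fin r₂), (p, q) ≠ (p', q') →
        Disjoint ((F (M p) (hM1 p) q).image (phi (M p)))
          ((F (M p') (hM1 p') q').image (phi (M p'))) := by
      intro p p' q q' hne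
      by_cases hpp : p = p'
      · subst hpp
        have hqq : q ≠ q' := fun h => hne (by rw [h])
        exact image_disjoint (M p) _ _ ((hM1 p).2.1)
          ((hF1 (M p) (hM1 p) q).1) ((hF1 (M p) (hM1 p) q').1)
          (hF2 (M p) (hM1 p) q q' hqq)
      · have hd := hM2 p p' hpp
        have hs1 : (F (M p) (hM1 p) q).image (phi (M p)) ⊆ M p :=
          image_subset (M p) _ ((hM1 p).2.1) ((hF1 (M p) (hM1 p) q).1)
        have hs2 : (F (M p') (hM1 p') q').image (phi (M p')) ⊆ M p' :=
          image_subset (M p') _ ((hM1 p').2.1) ((hF1 (M p') (hM1 p') q').1)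
        exact Finset.disjoint_of_subset_left hs1 (Finset.disjoint_of_subset_right hs2 hd)
    have hgD : ∀ x y, x ≠ y → Disjoint (g x) (g y) := by
      intro x y hxy
      have hne : finProdFinEquiv.symm x ≠ finProdFinEquiv.symm y :=
        fun h => hxy (finProdFinEquiv.symm.injective h)
      exact hgD' (finProdFinEquiv.symm x).1 (finProdFinEquiv.symm y).1
        (finProdFinEquiv.symm x).2 (finProdFinEquiv.symm y).2
        (by rw [Prod.mk.eta, Prod.mk.eta]; exact hne)
    -- all colors equal
    have hmono : ∀ x y, c (g x) = c (g y) := by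
      have hblock : ∀ x, c (g x) = cH (M (finProdFinEquiv.symm x).1) := by
        intro x
        have h1' : cH (M (finProdFinEquiv.symm x).1)
            = c ((F (M (finProdFinEquiv.symm x).1) (hM1 _) ⟨0, by omega⟩).image
                (phi (M (finProdFinEquiv.symm x).1))) := by
          rw [hcH]
          simp only [dif_pos (hM1 (finProdFinEquiv.symm x).1)]
        rw [h1']
        exact hF3 (M (finProdFinEquiv.symm x).1) (hM1 _) (finProdFinEquiv.symm x).2 ⟨0, by omega⟩
      intro x y
      rw [hblock x, hblock y]
      exact hM3 _ _
    obtain ⟨x, y, hxy⟩ := hc g hgV hgD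
    exact hxy (hmono x y)
end
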